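/- Let $T_n(x) = \frac{a_0}{2} + \sum_{k=1}^n (a_k \cos kx + b_k \sin kx)$ be a real trigonometric polynomial of degree at most $n$ whose leading coefficient pair $(a_n,b_n)$ is nonzero. Then $\sqrt{a_n^2 + b_n^2} \le \max_t |T_n(t)|$. -/

import Mathlib

open Real Finset

lemma sum_alt_trig (N : ℕ) (hN : Even N) (A B α θ : ℝ) (h1 : Real.sin θ ≠ 0)
    (h2 : ∃ m : ℤ, (N : ℝ) * θ = m * (2 * Real.pi)) :
    ∑ j ∈ Finset.range N, (-1 : ℝ) ^ j * (A * Real.cos (α + j * θ) + B * Real.sin (α + j * θ)) = 0 := by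
  set w : ℂ := -Complex.exp (θ * Complex.I) with hw
  have hw1 : w ≠ 1 := by
    intro h
    have : Complex.exp (θ * Complex.I) = -1 := by
      rw [hw] at h; linear_combination -h
    apply h1
    have := congrArg Complex.im this
    simpa [Complex.exp_ofReal_mul_I_im] using this
  have hwN : w ^ N = 1 := by
    obtain ⟨m, hm⟩ := h2
    rw [hw, neg_pow, hN.neg_one_pow, one_mul, ← Complex.exp_nat_mul]
    have : (N : ℂ) * (θ * Complex.I) = (m : ℂ) * (2 * Real.pi * Complex.I) := by
      push_cast
      rw [show ((N:ℂ) * ((θ:ℂ) * Complex.I)) = ((N:ℝ) * θ : ℝ) * Complex.I by push_cast; ring, hm]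
      push_cast; ring
    rw [this, Complex.exp_int_mul_two_pi_mul_I]
  have hgeom : ∑ j ∈ Finset.range N, w ^ j = 0 := by
    rw [geom_sum_eq hw1, hwN, sub_self, zero_div]
  have hterm : ∀ j : ℕ, (-1 : ℝ) ^ j * (A * Real.cos (α + j * θ) + B * Real.sin (α + j * θ))
      = ((((A : ℂ) - B * Complex.I) * Complex.exp (α * Complex.I)) * w ^ j).re := by
    intro j
    have hE : Complex.exp (α * Complex.I) * w ^ j
        = (-1 : ℂ) ^ j * Complex.exp (((α + j * θ : ℝ)) * Complex.I) := by
      rw [hw, neg_pow, ← Complex.exp_nat_mul]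
      rw [show (((α + j * θ : ℝ) : ℂ)) * Complex.I = α * Complex.I + (j : ℂ) * (θ * Complex.I) by push_cast; ring]
      rw [Complex.exp_add]; ring
    rw [mul_assoc, hE]
    simp only [Complex.mul_re, Complex.mul_im, Complex.sub_re, Complex.sub_im,
      Complex.ofReal_re, Complex.ofReal_im, Complex.mul_I_re, Complex.mul_I_im,
      Complex.exp_ofReal_mul_I_re, Complex.exp_ofReal_mul_I_im, Complex.I_re, Complex.I_im]
    have h1 : ((-1 : ℂ) ^ j).re = (-1 : ℝ) ^ j := by
      rw [show ((-1 : ℂ)) = ((-1 : ℝ) : ℂ) by norm_num, ← Complex.ofReal_pow, Complex.ofReal_re]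
    have h2 : ((-1 : ℂ) ^ j).im = 0 := by
      rw [show ((-1 : ℂ)) = ((-1 : ℝ) : ℂ) by norm_num, ← Complex.ofReal_pow, Complex.ofReal_im]
    rw [h1, h2]; ring
  calc ∑ j ∈ Finset.range N, (-1 : ℝ) ^ j * (A * Real.cos (α + j * θ) + B * Real.sin (α + j * θ))
      = ∑ j ∈ Finset.range N, ((((A : ℂ) - B * Complex.I) * Complex.exp (α * Complex.I)) * w ^ j).re := by
        exact Finset.sum_congr rfl fun j _ => hterm j
    _ = ((((A : ℂ) - B * Complex.I) * Complex.exp (α * Complex.I)) * ∑ j ∈ Finset.range N, w ^ j).re := by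
        rw [Finset.mul_sum, Complex.re_sum]
    _ = 0 := by rw [hgeom, mul_zero, Complex.zero_re]

theorem leading_coeff_bound (n : ℕ) (hn : 1 ≤ n) (a b : ℕ → ℝ) (a0 : ℝ) (T : ℝ → ℝ)
    (hT : ∀ x, T x = a0 / 2 + ∑ k ∈ Finset.Icc 1 n,
      (a k * Real.cos (k * x) + b k * Real.sin (k * x)))
    (hne : (a n, b n) ≠ (0, 0)) :
    Real.sqrt (a n ^ 2 + b n ^ 2) ≤ ⨆ t : ℝ, |T t| := by
  have hnR : (n : ℝ) ≠ 0 := Nat.cast_ne_zero.mpr (by omega)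
  set R := Real.sqrt (a n ^ 2 + b n ^ 2) with hRdef
  have hab : a n ≠ 0 ∨ b n ≠ 0 := by
    by_contra h; push_neg at h; exact hne (by rw [h.1, h.2])
  have habpos : 0 < a n ^ 2 + b n ^ 2 := by
    rcases hab with h | h
    · have := pow_pos (abs_pos.mpr h) 2
      nlinarith [sq_nonneg (b n), sq_abs (a n)]
    · have := pow_pos (abs_pos.mpr h) 2
      nlinarith [sq_nonneg (a n), sq_abs (b n)]
  have hRpos : 0 < R := Real.sqrt_pos.mpr habpos
  have hR2 : R ^ 2 = a n ^ 2 + b n ^ 2 := Real.sq_sqrt (le_of_lt habpos)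
  set z : ℂ := (a n : ℂ) + (b n : ℂ) * Complex.I with hzdef
  have hzre : z.re = a n := by simp [hzdef]
  have hzim : z.im = b n := by simp [hzdef]
  have hz : z ≠ 0 := by
    intro h
    rcases hab with h' | h'
    · exact h' (by rw [← hzre, h, Complex.zero_re])
    · exact h' (by rw [← hzim, h, Complex.zero_im])
  have habs : ‖z‖ = R := by
    rw [Complex.norm_def, Complex.normSq_apply, hzre, hzim, hRdef]
    congr 1; ring
  set φ := Complex.arg z with hφ
  have hcos : Real.cos φ = a n / R := by rw [hφ, Complex.cos_arg hz, hzre, habs]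
  have hsin : Real.sin φ = b n / R := by rw [hφ, Complex.sin_arg, hzim, habs]
  set x : ℕ → ℝ := fun j => (φ + j * Real.pi) / n with hx
  -- boundedness
  set M := ⨆ t : ℝ, |T t| with hM
  have hbdd : BddAbove (Set.range fun t => |T t|) := by
    refine ⟨|a0| / 2 + ∑ k ∈ Finset.Icc 1 n, (|a k| + |b k|), ?_⟩
    rintro y ⟨t, rfl⟩
    show |T t| ≤ _
    rw [hT t]
    calc |a0 / 2 + ∑ k ∈ Finset.Icc 1 n, (a k * Real.cos (k * t) + b k * Real.sin (k * t))|
        ≤ |a0 / 2| + |∑ k ∈ Finset.Icc 1 n, (a k * Real.cos (k * t) + b k * Real.sin (k * t))| :=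
          abs_add_le _ _
      _ ≤ |a0| / 2 + ∑ k ∈ Finset.Icc 1 n, (|a k| + |b k|) := by
          rw [abs_div, abs_two]
          gcongr
          calc |∑ k ∈ Finset.Icc 1 n, (a k * Real.cos (k * t) + b k * Real.sin (k * t))|
              ≤ ∑ k ∈ Finset.Icc 1 n, |a k * Real.cos (k * t) + b k * Real.sin (k * t)| :=
                Finset.abs_sum_le_sum_abs _ _
            _ ≤ ∑ k ∈ Finset.Icc 1 n, (|a k| + |b k|) := by
                apply Finset.sum_le_sum
                intro k _
                calc |a k * Real.cos (k * t) + b k * Real.sin (k * t)|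
                    ≤ |a k * Real.cos (k * t)| + |b k * Real.sin (k * t)| := abs_add_le _ _
                  _ ≤ |a k| + |b k| := by
                      rw [abs_mul, abs_mul]
                      exact add_le_add
                        (mul_le_of_le_one_right (abs_nonneg _) (Real.abs_cos_le_one _))
                        (mul_le_of_le_one_right (abs_nonneg _) (Real.abs_sin_le_one _))
  have hMt : ∀ t, |T t| ≤ M := fun t => le_ciSup hbdd t
  -- key identity
  have key : ∑ j ∈ Finset.range (2 * n), (-1 : ℝ) ^ j * T (x j) = (2 * n) * R := by
    simp only [hT]
    simp only [mul_add]
    rw [Finset.sum_add_distrib]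
    have h1 : ∑ j ∈ Finset.range (2 * n), (-1 : ℝ) ^ j * (a0 / 2) = 0 := by
      rw [← Finset.sum_mul, neg_one_geom_sum, if_pos (even_two_mul n), zero_mul]
    rw [h1, zero_add]
    have h2 : ∑ j ∈ Finset.range (2 * n), (-1 : ℝ) ^ j *
        (∑ k ∈ Finset.Icc 1 n, (a k * Real.cos (k * x j) + b k * Real.sin (k * x j)))
        = ∑ k ∈ Finset.Icc 1 n, ∑ j ∈ Finset.range (2 * n),
          (-1 : ℝ) ^ j * (a k * Real.cos (k * x j) + b k * Real.sin (k * x j)) := by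
      simp only [Finset.mul_sum]
      exact Finset.sum_comm
    rw [h2]
    rw [Finset.sum_eq_single_of_mem n (Finset.mem_Icc.mpr ⟨hn, le_refl n⟩)]
    · -- k = n term
      have hxn : ∀ j : ℕ, (n : ℝ) * x j = φ + j * Real.pi := by
        intro j; rw [hx]; field_simp
      simp only [hxn, Real.cos_add_nat_mul_pi, Real.sin_add_nat_mul_pi]
      have hterm : ∀ j : ℕ, (-1 : ℝ) ^ j * (a n * ((-1) ^ j * Real.cos φ) + b n * ((-1) ^ j * Real.sin φ)) = R := by
        intro j
        have hsq : (-1 : ℝ) ^ j * (-1 : ℝ) ^ j = 1 := by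
          rw [← pow_add]; exact Even.neg_one_pow ⟨j, rfl⟩
        calc (-1 : ℝ) ^ j * (a n * ((-1) ^ j * Real.cos φ) + b n * ((-1) ^ j * Real.sin φ))
            = ((-1 : ℝ) ^ j * (-1 : ℝ) ^ j) * (a n * Real.cos φ + b n * Real.sin φ) := by ring
          _ = a n * (a n / R) + b n * (b n / R) := by rw [hsq, one_mul, hcos, hsin]
          _ = (a n ^ 2 + b n ^ 2) / R := by ring
          _ = R ^ 2 / R := by rw [hR2]
          _ = R := by rw [sq]; field_simp
      rw [Finset.sum_congr rfl fun j _ => hterm j, Finset.sum_const, Finset.card_range,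
        nsmul_eq_mul]
      push_cast; ring
    · -- k < n terms vanish
      intro k hk hkn
      have hk1 : 1 ≤ k := (Finset.mem_Icc.mp hk).1
      have hkltn : k < n := lt_of_le_of_ne (Finset.mem_Icc.mp hk).2 hkn
      have hxk : ∀ j : ℕ, (k : ℝ) * x j = k * φ / n + j * (k * Real.pi / n) := by
        intro j; rw [hx]; field_simp
      simp only [hxk]
      apply sum_alt_trig (2 * n) (even_two_mul n)
      · apply ne_of_gt
        apply Real.sin_pos_of_pos_of_lt_pi
        · have : (0:ℝ) < k := by exact_mod_cast hk1
          positivity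
        · rw [div_lt_iff₀ (by positivity)]
          have : (k : ℝ) < n := by exact_mod_cast hkltn
          nlinarith [Real.pi_pos]
      · exact ⟨k, by field_simp; push_cast; ring⟩
  -- conclude
  have hle : (2 * n : ℝ) * R ≤ (2 * n : ℝ) * M := by
    calc (2 * n : ℝ) * R = ∑ j ∈ Finset.range (2 * n), (-1 : ℝ) ^ j * T (x j) := key.symm
      _ ≤ ∑ j ∈ Finset.range (2 * n), |(-1 : ℝ) ^ j * T (x j)| :=
          Finset.sum_le_sum fun j _ => le_abs_self _
      _ = ∑ j ∈ Finset.range (2 * n), |T (x j)| := by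
          apply Finset.sum_congr rfl
          intro j _
          rw [abs_mul, abs_pow, abs_neg, abs_one, one_pow, one_mul]
      _ ≤ ∑ j ∈ Finset.range (2 * n), M := Finset.sum_le_sum fun j _ => hMt (x j)
      _ = (2 * n : ℝ) * M := by
          rw [Finset.sum_const, Finset.card_range, nsmul_eq_mul]; push_cast; ring
  have h2n : (0:ℝ) < 2 * n := by positivity
  exact le_of_mul_le_mul_left hle h2n
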